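/- Let p be a prime and a a positive integer with p ∤ a. Then the polynomial ∏_{j=1}^{p−1} [a]_{q^j} = ∏_{j=1}^{p−1} (1 + q^j + q^{2j} + ⋯ + q^{(a−1)j}) is congruent to 1 modulo [p]_q = 1 + q + ⋯ + q^{p−1} in the polynomial ring ℤ[q]. (q-analogue of Fermat's little theorem.) -/

import Mathlib

open Polynomial Finset

/-- q-analogue of Fermat's little theorem: for a prime `p` and positive `a` with `p ∤ a`,
`∏_{j=1}^{p-1} (1 + q^j + ⋯ + q^{(a-1)j}) ≡ 1 (mod [p]_q)` in `ℤ[q]`. -/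
theorem q_fermat_little (p a : ℕ) (hp : p.Prime) (ha : 0 < a) (hpa : ¬ p ∣ a) :
    (∑ i ∈ Finset.range p, (Polynomial.X : Polynomial ℤ) ^ i) ∣
      (∏ j ∈ Finset.Icc 1 (p - 1),
        ∑ k ∈ Finset.range a, (Polynomial.X : Polynomial ℤ) ^ (k * j)) - 1 := by
  haveI : Fact p.Prime := ⟨hp⟩
  set g : Polynomial ℤ :=
    (∏ j ∈ Finset.Icc 1 (p - 1),
      ∑ k ∈ Finset.range a, (Polynomial.X : Polynomial ℤ) ^ (k * j)) - 1 with hg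
  rw [← Polynomial.cyclotomic_prime ℤ p]
  -- pass to ℚ
  rw [← Polynomial.map_dvd_map (Int.castRingHom ℚ) Int.cast_injective
    (Polynomial.cyclotomic.monic p ℤ), Polynomial.map_cyclotomic]
  -- primitive root
  set ζ : ℂ := Complex.exp (2 * Real.pi * Complex.I / p) with hζdef
  have hζ : IsPrimitiveRoot ζ p := Complex.isPrimitiveRoot_exp p hp.ne_zero
  rw [Polynomial.cyclotomic_eq_minpoly_rat hζ hp.pos]
  apply minpoly.dvd
  have : (Int.castRingHom ℚ) = algebraMap ℤ ℚ := rfl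
  rw [this, Polynomial.aeval_map_algebraMap]
  -- compute aeval
  have hpow1 : ζ ^ p = 1 := hζ.pow_eq_one
  have hmem : ∀ j ∈ Finset.Icc 1 (p - 1), 1 ≤ j ∧ j < p := by
    intro j hj
    simp only [Finset.mem_Icc] at hj
    exact ⟨hj.1, by omega⟩
  have hne1 : ∀ j ∈ Finset.Icc 1 (p - 1), ζ ^ j ≠ 1 := fun j hj =>
    hζ.pow_ne_one_of_pos_of_lt (Nat.one_le_iff_ne_zero.mp (hmem j hj).1) (hmem j hj).2
  -- the inverse of a mod p
  have hane : (a : ZMod p) ≠ 0 := by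
    rwa [Ne, ZMod.natCast_eq_zero_iff]
  set b : ℕ := ((a : ZMod p)⁻¹).val with hbdef
  have hbcast : (b : ZMod p) = (a : ZMod p)⁻¹ := by
    rw [hbdef, ZMod.natCast_val, ZMod.cast_id]
  have hpb : ¬ p ∣ b := by
    rw [← ZMod.natCast_eq_zero_iff, hbcast]
    exact inv_ne_zero hane
  have key : ∀ c : ℕ, ¬ p ∣ c → ∀ j ∈ Finset.Icc 1 (p - 1), (c * j) % p ∈ Finset.Icc 1 (p - 1) := by
    intro c hc j hj
    obtain ⟨h1, h2⟩ := hmem j hj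
    have hlt : (c * j) % p < p := Nat.mod_lt _ hp.pos
    have hne : (c * j) % p ≠ 0 := by
      rw [Ne, ← Nat.dvd_iff_mod_eq_zero]
      intro hdvd
      rcases (hp.dvd_mul).1 hdvd with h | h
      · exact hc h
      · exact absurd (Nat.le_of_dvd (by omega) h) (by omega)
    simp only [Finset.mem_Icc]
    omega
  have hinv : ∀ j ∈ Finset.Icc 1 (p - 1), (b * ((a * j) % p)) % p = j := by
    intro j hj
    obtain ⟨h1, h2⟩ := hmem j hj
    have hcast : (((b * ((a * j) % p)) % p : ℕ) : ZMod p) = ((j : ℕ) : ZMod p) := by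
      push_cast [ZMod.natCast_mod]
      rw [hbcast]
      field_simp
    have := congrArg ZMod.val hcast
    rwa [ZMod.val_natCast_of_lt (Nat.mod_lt _ hp.pos), ZMod.val_natCast_of_lt h2] at this
  have hinv' : ∀ j ∈ Finset.Icc 1 (p - 1), (a * ((b * j) % p)) % p = j := by
    intro j hj
    obtain ⟨h1, h2⟩ := hmem j hj
    have hcast : (((a * ((b * j) % p)) % p : ℕ) : ZMod p) = ((j : ℕ) : ZMod p) := by
      push_cast [ZMod.natCast_mod]
      rw [hbcast]
      field_simp
    have := congrArg ZMod.val hcast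
    rwa [ZMod.val_natCast_of_lt (Nat.mod_lt _ hp.pos), ZMod.val_natCast_of_lt h2] at this
  -- reindexing product
  have hreindex : ∏ j ∈ Finset.Icc 1 (p - 1), (ζ ^ (a * j) - 1)
      = ∏ j ∈ Finset.Icc 1 (p - 1), (ζ ^ j - 1) := by
    apply Finset.prod_nbij' (fun j => (a * j) % p) (fun j => (b * j) % p)
    · exact key a hpa
    · exact key b hpb
    · exact hinv
    · exact hinv'
    · intro j hj
      rw [pow_eq_pow_mod (a * j) hpow1]
  -- product of geometric sums
  have hD : (∏ j ∈ Finset.Icc 1 (p - 1), (ζ ^ j - 1)) ≠ 0 := by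
    apply Finset.prod_ne_zero_iff.mpr
    intro j hj
    exact sub_ne_zero.mpr (hne1 j hj)
  have hP : (∏ j ∈ Finset.Icc 1 (p - 1), ∑ k ∈ Finset.range a, ζ ^ (k * j)) = 1 := by
    have hmul : (∏ j ∈ Finset.Icc 1 (p - 1), ∑ k ∈ Finset.range a, ζ ^ (k * j))
        * (∏ j ∈ Finset.Icc 1 (p - 1), (ζ ^ j - 1))
        = ∏ j ∈ Finset.Icc 1 (p - 1), (ζ ^ j - 1) := by
      rw [← Finset.prod_mul_distrib]
      rw [← hreindex]
      apply Finset.prod_congr rfl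
      intro j hj
      have : (∑ k ∈ Finset.range a, ζ ^ (k * j)) = ∑ k ∈ Finset.range a, (ζ ^ j) ^ k := by
        apply Finset.sum_congr rfl
        intro k _
        rw [← pow_mul, mul_comm]
      rw [this, geom_sum_mul, ← pow_mul, mul_comm j a]
    exact mul_right_cancel₀ hD (by rw [hmul, one_mul])
  rw [hg]
  simp only [map_sub, map_one, map_prod, map_sum, map_pow, Polynomial.aeval_X]
  rw [hP, sub_self]
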